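/- Let M ≥ 2 and n₁,…,n_M ≥ 2 be integers, S = ∏_{j=1}^M {1,…,n_j}, Q = ∏_{i=1}^M n_i − ∑_{i=1}^M n_i + M − 1, and let Cor be the S×S matrix whose (z,z′) entry is c_{I(z,z′)}, where I(z,z′) = {j : z_j = z′_j} is the agreement set, c_I = (M − 1 − ∑_{i∈I} n_i)/Q for I ⊊ {1,…,M}, and c_{{1,…,M}} = 1. Then Cor is symmetric and positive semidefinite, and its set of eigenvalues is exactly {0, (∏_{i=1}^M n_i)/Q}; in particular both values occur as eigenvalues, with the nonzero eigenvalue having multiplicity Q and the zero eigenvalue having multiplicity ∑_{i=1}^M n_i − M + 1. -/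

import Mathlib

open Finset

open Matrix

section aux
variable {M : ℕ} {n : Fin M → ℕ}

private lemma prod_eq_single_value (i : Fin M) (h : Fin M → ℝ)
    (hh : ∀ j, j ≠ i → h j = 1) : ∏ j, h j = h i :=
  Finset.prod_eq_single_of_mem i (mem_univ i) (fun j _ hj => hh j hj)

private lemma prod_eq_double_value (i k : Fin M) (hik : k ≠ i) (h : Fin M → ℝ)
    (hh : ∀ j, j ≠ i → j ≠ k → h j = 1) : ∏ j, h j = h i * h k := by
  rw [← Finset.mul_prod_erase univ h (mem_univ i)]
  congr 1
  rw [← Finset.mul_prod_erase _ h (Finset.mem_erase.mpr ⟨hik, mem_univ k⟩)]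
  rw [Finset.prod_eq_one fun j hj => hh j
      (Finset.mem_erase.mp (Finset.mem_erase.mp hj).2).1 (Finset.mem_erase.mp hj).1, mul_one]

private lemma prod_ite_erase (i : Fin M) (c : ℝ) :
    ∏ j, (if j = i then c else (n j : ℝ)) = c * ∏ j ∈ univ.erase i, (n j : ℝ) := by
  rw [← Finset.mul_prod_erase univ _ (mem_univ i), if_pos rfl]
  congr 1
  exact Finset.prod_congr rfl fun j hj => if_neg (Finset.ne_of_mem_erase hj)

private lemma prod_ite_erase2 (i k : Fin M) (hik : k ≠ i) (c d : ℝ) :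
    ∏ j, (if j = i then c else if j = k then d else (n j : ℝ))
      = c * (d * ∏ j ∈ (univ.erase i).erase k, (n j : ℝ)) := by
  rw [← Finset.mul_prod_erase univ _ (mem_univ i), if_pos rfl]
  congr 1
  rw [← Finset.mul_prod_erase _ _ (Finset.mem_erase.mpr ⟨hik, mem_univ k⟩),
    if_neg hik, if_pos rfl]
  congr 1
  refine Finset.prod_congr rfl fun j hj => ?_
  rw [if_neg (Finset.mem_erase.mp (Finset.mem_erase.mp hj).2).1,
    if_neg (Finset.mem_erase.mp hj).1]
end aux


section counting
variable {M : ℕ} {n : Fin M → ℕ}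

private lemma sum_ind_one (w : ∀ j, Fin (n j)) (i : Fin M) :
    ∑ z : ∀ j, Fin (n j), (if w i = z i then (1:ℝ) else 0)
      = ∏ j ∈ univ.erase i, (n j : ℝ) := by
  classical
  set g : ∀ j, Fin (n j) → ℝ :=
    fun j x => if j = i then (if w j = x then (1:ℝ) else 0) else 1 with hg
  have key := Fintype.prod_sum g
  have hpt : ∀ z : ∀ j, Fin (n j),
      (if w i = z i then (1:ℝ) else 0) = ∏ j, g j (z j) := by
    intro z
    rw [prod_eq_single_value i _ (fun j hj => if_neg hj)]
    simp [hg]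
  calc ∑ z : ∀ j, Fin (n j), (if w i = z i then (1:ℝ) else 0)
      = ∑ z : ∀ j, Fin (n j), ∏ j, g j (z j) := Finset.sum_congr rfl fun z _ => hpt z
    _ = ∏ j, ∑ x : Fin (n j), g j x := key.symm
    _ = ∏ j, (if j = i then (1:ℝ) else (n j : ℝ)) := by
        refine Finset.prod_congr rfl fun j _ => ?_
        by_cases hj : j = i
        · simp [hg, hj]
        · simp [hg, hj]
    _ = _ := by rw [prod_ite_erase, one_mul]

private lemma sum_ind_one' (w : ∀ j, Fin (n j)) (i : Fin M) :
    ∑ z : ∀ j, Fin (n j), (if z i = w i then (1:ℝ) else 0)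
      = ∏ j ∈ univ.erase i, (n j : ℝ) := by
  rw [← sum_ind_one w i]
  exact Finset.sum_congr rfl fun z _ => if_congr eq_comm rfl rfl

private lemma sum_ind_two (w w' : ∀ j, Fin (n j)) (i k : Fin M) (hik : k ≠ i) :
    ∑ z : ∀ j, Fin (n j), (if w i = z i then (1:ℝ) else 0) * (if z k = w' k then (1:ℝ) else 0)
      = ∏ j ∈ (univ.erase i).erase k, (n j : ℝ) := by
  classical
  set g : ∀ j, Fin (n j) → ℝ :=
    fun j x => if j = i then (if w j = x then (1:ℝ) else 0)
      else if j = k then (if x = w' j then (1:ℝ) else 0) else 1 with hg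
  have key := Fintype.prod_sum g
  have hpt : ∀ z : ∀ j, Fin (n j),
      (if w i = z i then (1:ℝ) else 0) * (if z k = w' k then (1:ℝ) else 0)
        = ∏ j, g j (z j) := by
    intro z
    rw [prod_eq_double_value i k hik _ (fun j hj1 hj2 => by simp [hg, hj1, hj2])]
    have hk : (k = i) = False := by simp [hik]
    simp [hg, hik]
  calc ∑ z : ∀ j, Fin (n j),
        (if w i = z i then (1:ℝ) else 0) * (if z k = w' k then (1:ℝ) else 0)
      = ∑ z : ∀ j, Fin (n j), ∏ j, g j (z j) := Finset.sum_congr rfl fun z _ => hpt z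
    _ = ∏ j, ∑ x : Fin (n j), g j x := key.symm
    _ = ∏ j, (if j = i then (1:ℝ) else if j = k then (1:ℝ) else (n j : ℝ)) := by
        refine Finset.prod_congr rfl fun j _ => ?_
        by_cases hj : j = i
        · simp [hg, hj, hik]
        · by_cases hj2 : j = k
          · simp [hg, hj, hj2]
          · simp [hg, hj, hj2]
    _ = _ := by rw [prod_ite_erase2 i k hik, one_mul, one_mul]

private lemma sum_ind_diag (w w' : ∀ j, Fin (n j)) (i : Fin M) :
    ∑ z : ∀ j, Fin (n j), (if w i = z i then (1:ℝ) else 0) * (if z i = w' i then (1:ℝ) else 0)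
      = (if w i = w' i then (1:ℝ) else 0) * ∏ j ∈ univ.erase i, (n j : ℝ) := by
  classical
  set g : ∀ j, Fin (n j) → ℝ :=
    fun j x => if j = i then (if w j = x then (1:ℝ) else 0) * (if x = w' j then (1:ℝ) else 0)
      else 1 with hg
  have key := Fintype.prod_sum g
  have hpt : ∀ z : ∀ j, Fin (n j),
      (if w i = z i then (1:ℝ) else 0) * (if z i = w' i then (1:ℝ) else 0)
        = ∏ j, g j (z j) := by
    intro z
    rw [prod_eq_single_value i _ (fun j hj => by simp [hg, hj])]
    simp [hg]
  have hsum : ∀ j, ∑ x : Fin (n j), g j x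
      = (if j = i then (if w i = w' i then (1:ℝ) else 0) else (n j : ℝ)) := by
    intro j
    by_cases hj : j = i
    · subst hj
      simp only [hg, if_pos rfl]
      rcases eq_or_ne (w j) (w' j) with h | h
      · rw [if_pos h]
        rw [Finset.sum_eq_single (w j)]
        · simp [h]
        · intro x _ hx; rw [if_neg (fun hh => hx hh.symm), zero_mul]
        · simp
      · rw [if_neg h]
        refine Finset.sum_eq_zero fun x _ => ?_
        rcases eq_or_ne (w j) x with hx | hx
        · subst hx; simp [h]
        · rw [if_neg hx, zero_mul]
    · simp [hg, hj]
  calc ∑ z : ∀ j, Fin (n j),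
        (if w i = z i then (1:ℝ) else 0) * (if z i = w' i then (1:ℝ) else 0)
      = ∑ z : ∀ j, Fin (n j), ∏ j, g j (z j) := Finset.sum_congr rfl fun z _ => hpt z
    _ = ∏ j, ∑ x : Fin (n j), g j x := key.symm
    _ = ∏ j, (if j = i then (if w i = w' i then (1:ℝ) else 0) else (n j : ℝ)) :=
        Finset.prod_congr rfl fun j _ => hsum j
    _ = _ := by rw [prod_ite_erase]

end counting

section fm
variable {M : ℕ} {n : Fin M → ℕ}

private def fm (M : ℕ) (n : Fin M → ℕ) (z z' : ∀ j, Fin (n j)) : ℝ :=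
  (M : ℝ) - 1 - ∑ i, (n i : ℝ) * (if z i = z' i then 1 else 0)

private lemma fm_symm (z z' : ∀ j, Fin (n j)) : fm M n z z' = fm M n z' z := by
  unfold fm
  congr 1
  exact Finset.sum_congr rfl fun i _ => by rw [if_congr eq_comm rfl rfl]

private lemma card_pi_real :
    ((Fintype.card (∀ j, Fin (n j)) : ℕ) : ℝ) = ∏ i, (n i : ℝ) := by
  rw [Fintype.card_pi]
  push_cast
  simp

private lemma mul_prod_erase_real (i : Fin M) :
    (n i : ℝ) * ∏ j ∈ univ.erase i, (n j : ℝ) = ∏ j, (n j : ℝ) :=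
  Finset.mul_prod_erase univ (fun j => (n j : ℝ)) (mem_univ i)

private lemma sum_fm_right (z : ∀ j, Fin (n j)) :
    ∑ z' : ∀ j, Fin (n j), fm M n z z' = -(∏ i, (n i : ℝ)) := by
  unfold fm
  rw [Finset.sum_sub_distrib, Finset.sum_const, Finset.sum_comm]
  have h1 : ∀ i : Fin M, ∑ z' : ∀ j, Fin (n j), (n i : ℝ) * (if z i = z' i then 1 else 0)
      = ∏ j, (n j : ℝ) := by
    intro i
    rw [← Finset.mul_sum, sum_ind_one z i, mul_prod_erase_real]
  rw [Finset.sum_congr rfl fun i _ => h1 i, Finset.sum_const, Finset.card_univ,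
    Finset.card_univ, nsmul_eq_mul, nsmul_eq_mul, card_pi_real, Fintype.card_fin]
  ring

end fm

section fm2
variable {M : ℕ} {n : Fin M → ℕ}

private lemma sum_fm_mul (z z'' : ∀ j, Fin (n j)) :
    ∑ z' : ∀ j, Fin (n j), fm M n z z' * fm M n z' z''
      = -(∏ i, (n i : ℝ)) * fm M n z z'' := by
  classical
  set P : ℝ := ∏ i, (n i : ℝ) with hP
  have hdiag : ∀ i : Fin M,
      ∑ z' : ∀ j, Fin (n j),
        ((n i : ℝ) * (if z i = z' i then 1 else 0)) * ((n i : ℝ) * (if z' i = z'' i then 1 else 0))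
      = (n i : ℝ) * P * (if z i = z'' i then 1 else 0) := by
    intro i
    have h1 : ∀ z' : ∀ j, Fin (n j),
        ((n i : ℝ) * (if z i = z' i then 1 else 0)) * ((n i : ℝ) * (if z' i = z'' i then 1 else 0))
        = ((n i : ℝ) * (n i : ℝ)) * ((if z i = z' i then (1:ℝ) else 0) * (if z' i = z'' i then 1 else 0)) := by
      intro z'; ring
    rw [Finset.sum_congr rfl fun z' _ => h1 z', ← Finset.mul_sum, sum_ind_diag z z'' i]
    calc ((n i : ℝ) * (n i : ℝ)) * ((if z i = z'' i then (1:ℝ) else 0) * ∏ j ∈ univ.erase i, (n j : ℝ))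
        = ((n i : ℝ) * ∏ j ∈ univ.erase i, (n j : ℝ)) * ((n i : ℝ) * (if z i = z'' i then (1:ℝ) else 0)) := by ring
      _ = (n i : ℝ) * P * (if z i = z'' i then 1 else 0) := by
          rw [mul_prod_erase_real i]; ring
  have hoff : ∀ i k : Fin M, k ≠ i →
      ∑ z' : ∀ j, Fin (n j),
        ((n i : ℝ) * (if z i = z' i then 1 else 0)) * ((n k : ℝ) * (if z' k = z'' k then 1 else 0))
      = P := by
    intro i k hk
    have h1 : ∀ z' : ∀ j, Fin (n j),
        ((n i : ℝ) * (if z i = z' i then 1 else 0)) * ((n k : ℝ) * (if z' k = z'' k then 1 else 0))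
        = ((n i : ℝ) * (n k : ℝ)) * ((if z i = z' i then (1:ℝ) else 0) * (if z' k = z'' k then 1 else 0)) := by
      intro z'; ring
    rw [Finset.sum_congr rfl fun z' _ => h1 z', ← Finset.mul_sum, sum_ind_two z z'' i k hk]
    have h2 : (n k : ℝ) * ∏ j ∈ (univ.erase i).erase k, (n j : ℝ)
        = ∏ j ∈ univ.erase i, (n j : ℝ) :=
      Finset.mul_prod_erase (univ.erase i) (fun j => (n j : ℝ))
        (Finset.mem_erase.mpr ⟨hk, mem_univ k⟩)
    calc ((n i : ℝ) * (n k : ℝ)) * ∏ j ∈ (univ.erase i).erase k, (n j : ℝ)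
        = (n i : ℝ) * ((n k : ℝ) * ∏ j ∈ (univ.erase i).erase k, (n j : ℝ)) := by ring
      _ = P := by rw [h2, mul_prod_erase_real i]
  have hinner : ∀ i : Fin M,
      ∑ k, ∑ z' : ∀ j, Fin (n j),
        ((n i : ℝ) * (if z i = z' i then 1 else 0)) * ((n k : ℝ) * (if z' k = z'' k then 1 else 0))
      = P * ((n i : ℝ) * (if z i = z'' i then 1 else 0)) + ((M : ℝ) - 1) * P := by
    intro i
    rw [← Finset.add_sum_erase univ _ (mem_univ i), hdiag i]
    have h3 : ∀ k ∈ univ.erase i,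
        ∑ z' : ∀ j, Fin (n j),
          ((n i : ℝ) * (if z i = z' i then 1 else 0)) * ((n k : ℝ) * (if z' k = z'' k then 1 else 0))
        = P := fun k hk => hoff i k (Finset.mem_erase.mp hk).1
    rw [Finset.sum_congr rfl h3, Finset.sum_const, Finset.card_erase_of_mem (mem_univ i),
      Finset.card_univ, Fintype.card_fin, nsmul_eq_mul, Nat.cast_sub i.pos]
    push_cast
    ring
  -- pointwise expansion
  have hpt : ∀ z' : ∀ j, Fin (n j),
      fm M n z z' * fm M n z' z''
      = ((M:ℝ) - 1) * ((M:ℝ) - 1)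
        - ((M:ℝ) - 1) * (∑ k, (n k : ℝ) * (if z' k = z'' k then 1 else 0))
        - ((M:ℝ) - 1) * (∑ i, (n i : ℝ) * (if z i = z' i then 1 else 0))
        + ∑ i, ∑ k, ((n i : ℝ) * (if z i = z' i then 1 else 0)) * ((n k : ℝ) * (if z' k = z'' k then 1 else 0)) := by
    intro z'
    rw [← Finset.sum_mul_sum]
    unfold fm
    ring
  rw [Finset.sum_congr rfl fun z' _ => hpt z']
  rw [Finset.sum_add_distrib, Finset.sum_sub_distrib, Finset.sum_sub_distrib]
  have hT1 : ∑ _z' : ∀ j, Fin (n j), ((M:ℝ) - 1) * ((M:ℝ) - 1)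
      = P * (((M:ℝ) - 1) * ((M:ℝ) - 1)) := by
    rw [Finset.sum_const, Finset.card_univ, nsmul_eq_mul, card_pi_real]
  have hT2 : ∑ z' : ∀ j, Fin (n j),
      ((M:ℝ) - 1) * (∑ k, (n k : ℝ) * (if z' k = z'' k then 1 else 0))
      = ((M:ℝ) - 1) * ((M:ℝ) * P) := by
    rw [← Finset.mul_sum]
    congr 1
    rw [Finset.sum_comm]
    have h4 : ∀ k : Fin M, ∑ z' : ∀ j, Fin (n j), (n k : ℝ) * (if z' k = z'' k then 1 else 0)
        = P := by
      intro k
      rw [← Finset.mul_sum, sum_ind_one' z'' k, mul_prod_erase_real k]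
    rw [Finset.sum_congr rfl fun k _ => h4 k, Finset.sum_const, Finset.card_univ,
      Fintype.card_fin, nsmul_eq_mul]
  have hT3 : ∑ z' : ∀ j, Fin (n j),
      ((M:ℝ) - 1) * (∑ i, (n i : ℝ) * (if z i = z' i then 1 else 0))
      = ((M:ℝ) - 1) * ((M:ℝ) * P) := by
    rw [← Finset.mul_sum]
    congr 1
    rw [Finset.sum_comm]
    have h4 : ∀ i : Fin M, ∑ z' : ∀ j, Fin (n j), (n i : ℝ) * (if z i = z' i then 1 else 0)
        = P := by
      intro i
      rw [← Finset.mul_sum, sum_ind_one z i, mul_prod_erase_real i]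
    rw [Finset.sum_congr rfl fun i _ => h4 i, Finset.sum_const, Finset.card_univ,
      Fintype.card_fin, nsmul_eq_mul]
  have hT4 : ∑ z' : ∀ j, Fin (n j), ∑ i, ∑ k,
      ((n i : ℝ) * (if z i = z' i then 1 else 0)) * ((n k : ℝ) * (if z' k = z'' k then 1 else 0))
      = P * (∑ i, (n i : ℝ) * (if z i = z'' i then 1 else 0)) + (M:ℝ) * (((M:ℝ) - 1) * P) := by
    rw [Finset.sum_comm]
    have h5 : ∀ i : Fin M, ∑ z' : ∀ j, Fin (n j), ∑ k,
        ((n i : ℝ) * (if z i = z' i then 1 else 0)) * ((n k : ℝ) * (if z' k = z'' k then 1 else 0))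
        = P * ((n i : ℝ) * (if z i = z'' i then 1 else 0)) + ((M : ℝ) - 1) * P := by
      intro i
      rw [Finset.sum_comm]
      exact hinner i
    rw [Finset.sum_congr rfl fun i _ => h5 i, Finset.sum_add_distrib, ← Finset.mul_sum,
      Finset.sum_const, Finset.card_univ, Fintype.card_fin, nsmul_eq_mul]
  rw [hT1, hT2, hT3, hT4]
  unfold fm
  ring
end fm2

private lemma sum_le_prod_nat {ι : Type*} (s : Finset ι) (f : ι → ℕ)
    (hf : ∀ i ∈ s, 2 ≤ f i) (hs : s.Nonempty) : ∑ i ∈ s, f i ≤ ∏ i ∈ s, f i := by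
  classical
  induction s using Finset.induction_on with
  | empty => exact absurd hs (by simp)
  | insert a s ha ih =>
    rcases s.eq_empty_or_nonempty with rfl | hs'
    · simp
    · have ihs := ih (fun i hi => hf i (Finset.mem_insert_of_mem hi)) hs'
      rw [Finset.sum_insert ha, Finset.prod_insert ha]
      have h2a := hf a (Finset.mem_insert_self a s)
      obtain ⟨b, hb⟩ := hs'
      have h2p : 2 ≤ ∏ i ∈ s, f i :=
        le_trans (le_trans (hf b (Finset.mem_insert_of_mem hb))
          (Finset.single_le_sum (fun i _ => Nat.zero_le _) hb)) ihs
      calc f a + ∑ i ∈ s, f i ≤ f a + ∏ i ∈ s, f i := by omega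
        _ ≤ f a * ∏ i ∈ s, f i := by nlinarith

private lemma trace_mulVecLin {ι : Type*} [Fintype ι] [DecidableEq ι] (A : Matrix ι ι ℝ) :
    LinearMap.trace ℝ (ι → ℝ) A.mulVecLin = Matrix.trace A := by
  rw [LinearMap.trace_eq_matrix_trace ℝ (Pi.basisFun ℝ ι), LinearMap.toMatrix_eq_toMatrix',
    ← Matrix.toLin'_apply', LinearMap.toMatrix'_toLin']

/-- **Theorem 2 + Lemma 1 of the paper for the equal-prevalence correlation
matrix (35).** The matrix `Cor` with entries `c_{I(z,z′)}` is symmetric and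
positive semidefinite; its set of eigenvalues is exactly `{0, (∏ nᵢ)/Q}`,
the nonzero eigenvalue having multiplicity `Q` and the zero eigenvalue having
multiplicity `∑ nᵢ − M + 1`. -/
theorem equal_prevalence_correlation_matrix_spectrum
    (M : ℕ) (hM : 2 ≤ M) (n : Fin M → ℕ) (hn : ∀ j, 2 ≤ n j)
    (Q : ℕ) (hQ : (Q : ℝ) = (∏ i, (n i : ℝ)) - (∑ i, (n i : ℝ)) + M - 1)
    (c : Finset (Fin M) → ℝ)
    (hc : ∀ I : Finset (Fin M), I ≠ Finset.univ →
      c I = ((M : ℝ) - 1 - ∑ i ∈ I, (n i : ℝ)) / (Q : ℝ))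
    (hcuniv : c Finset.univ = 1)
    (Cor : Matrix (∀ j, Fin (n j)) (∀ j, Fin (n j)) ℝ)
    (hCor : ∀ z z' : ∀ j, Fin (n j),
      Cor z z' = c (Finset.univ.filter fun j => z j = z' j)) :
    Cor.IsSymm ∧ Cor.PosSemidef ∧
    {t : ℝ | ∃ v : (∀ j, Fin (n j)) → ℝ, v ≠ 0 ∧ Cor.mulVec v = t • v}
      = {0, (∏ i, (n i : ℝ)) / (Q : ℝ)} ∧
    Module.finrank ℝ
      (Module.End.eigenspace Cor.mulVecLin ((∏ i, (n i : ℝ)) / (Q : ℝ))) = Q ∧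
    Module.finrank ℝ (Module.End.eigenspace Cor.mulVecLin 0)
      = (∑ i, n i) - M + 1 := by
  classical
  have hPpos : (0:ℝ) < ∏ i, (n i : ℝ) :=
    Finset.prod_pos fun i _ => by have := hn i; positivity
  set P : ℝ := ∏ i, (n i : ℝ) with hP
  have hPne : P ≠ 0 := ne_of_gt hPpos
  have hSum2M : 2 * M ≤ ∑ i, n i := by
    calc 2 * M = ∑ _i : Fin M, 2 := by
          rw [Finset.sum_const, Finset.card_univ, Fintype.card_fin, smul_eq_mul]; ring
      _ ≤ ∑ i, n i := Finset.sum_le_sum fun i _ => hn i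
  have hprodsum : ∑ i, n i ≤ ∏ i, n i :=
    sum_le_prod_nat univ n (fun i _ => hn i) ⟨⟨0, by omega⟩, mem_univ _⟩
  have Hnat : Q + (∑ i, n i) + 1 = (∏ i, n i) + M := by
    have h : (Q:ℝ) + (∑ i, (n i : ℝ)) + 1 = (∏ i, (n i : ℝ)) + M := by rw [hQ]; ring
    exact_mod_cast h
  have hQpos : 0 < Q := by omega
  have hQR : (0:ℝ) < (Q:ℝ) := by exact_mod_cast hQpos
  have hQne : (Q:ℝ) ≠ 0 := ne_of_gt hQR
  -- entrywise description
  have hCor' : ∀ z z' : ∀ j, Fin (n j),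
      Cor z z' = (fm M n z z' + (if z = z' then P else 0)) / (Q:ℝ) := by
    intro z z'
    rcases eq_or_ne z z' with rfl | hne
    · rw [hCor z z, if_pos rfl]
      have hfil : (Finset.univ.filter fun j => z j = z j) = Finset.univ := by simp
      rw [hfil, hcuniv]
      unfold fm
      have h1 : ∑ i, (n i : ℝ) * (if z i = z i then 1 else 0) = ∑ i, (n i : ℝ) := by simp
      rw [h1]
      have hnum : (M:ℝ) - 1 - (∑ i, (n i : ℝ)) + P = (Q:ℝ) := by rw [hQ]; ring
      rw [hnum, div_self hQne]
    · rw [hCor z z', if_neg hne]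
      have hfil : (Finset.univ.filter fun j => z j = z' j) ≠ Finset.univ := by
        intro h
        apply hne; funext j
        have hj : j ∈ Finset.univ.filter fun j => z j = z' j := by
          rw [h]; exact mem_univ j
        exact (Finset.mem_filter.mp hj).2
      rw [hc _ hfil, add_zero]
      congr 1
      unfold fm
      congr 1
      rw [Finset.sum_filter]
      exact Finset.sum_congr rfl fun i _ => by rw [mul_ite, mul_one, mul_zero]
  have hdiagone : ∀ z : ∀ j, Fin (n j), Cor z z = 1 := by
    intro z
    rw [hCor z z]
    have hfil : (Finset.univ.filter fun j => z j = z j) = Finset.univ := by simp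
    rw [hfil, hcuniv]
  have hent_symm : ∀ z z' : ∀ j, Fin (n j), Cor z z' = Cor z' z := by
    intro z z'
    rw [hCor' z z', hCor' z' z, fm_symm, if_congr (Iff.intro Eq.symm Eq.symm) rfl rfl]
  have hsymm : Cor.IsSymm := by
    ext z z'
    rw [Matrix.transpose_apply]
    exact hent_symm z' z
  -- matrix equation
  have hmul : Cor * Cor = ((P / (Q:ℝ)) • Cor) := by
    ext z z''
    rw [Matrix.mul_apply, Matrix.smul_apply, smul_eq_mul]
    have h1 : ∀ z' : ∀ j, Fin (n j), Cor z z' * Cor z' z''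
        = ((fm M n z z' + (if z = z' then P else 0))
            * (fm M n z' z'' + (if z' = z'' then P else 0))) / ((Q:ℝ) * Q) := by
      intro z'
      rw [hCor' z z', hCor' z' z'', div_mul_div_comm]
    rw [Finset.sum_congr rfl fun z' _ => h1 z', ← Finset.sum_div]
    have hexp : ∀ z' : ∀ j, Fin (n j),
        (fm M n z z' + (if z = z' then P else 0))
            * (fm M n z' z'' + (if z' = z'' then P else 0))
        = fm M n z z' * fm M n z' z''
          + (if z = z' then P else 0) * fm M n z' z''
          + fm M n z z' * (if z' = z'' then P else 0)
          + (if z = z' then P else 0) * (if z' = z'' then P else 0) := by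
      intro z'
      ring
    rw [Finset.sum_congr rfl fun z' _ => hexp z']
    rw [Finset.sum_add_distrib, Finset.sum_add_distrib, Finset.sum_add_distrib]
    rw [sum_fm_mul z z'']
    have ht2 : ∀ z' : ∀ j, Fin (n j),
        (if z = z' then P else 0) * fm M n z' z'' = (if z = z' then P * fm M n z' z'' else 0) :=
      fun z' => by rw [ite_mul, zero_mul]
    rw [Finset.sum_congr rfl fun z' _ => ht2 z']
    have ht4 : ∀ z' : ∀ j, Fin (n j),
        (if z = z' then P else 0) * (if z' = z'' then P else 0)
          = (if z = z' then P * (if z' = z'' then P else 0) else 0) :=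
      fun z' => by rw [ite_mul, zero_mul]
    rw [Finset.sum_congr rfl fun z' _ => ht4 z']
    rw [Finset.sum_ite_eq univ z (fun z' => P * fm M n z' z''), if_pos (mem_univ z)]
    have hmid : ∀ z' : ∀ j, Fin (n j),
        fm M n z z' * (if z' = z'' then P else 0) = (if z' = z'' then fm M n z z' * P else 0) :=
      fun z' => by rw [mul_ite, mul_zero]
    rw [Finset.sum_congr rfl fun z' _ => hmid z']
    rw [Finset.sum_ite_eq' univ z'' (fun z' => fm M n z z' * P), if_pos (mem_univ z'')]
    rw [Finset.sum_ite_eq univ z (fun z' => P * (if z' = z'' then P else 0)), if_pos (mem_univ z)]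
    rw [hCor' z z'']
    rw [div_mul_div_comm]
    congr 1
    ring
  -- positive semidefinite
  have hPQpos : (0:ℝ) < P / Q := div_pos hPpos hQR
  have hpsd : Cor.PosSemidef := by
    refine Matrix.posSemidef_iff_dotProduct_mulVec.mpr ⟨?_, ?_⟩
    · ext z z'
      rw [Matrix.conjTranspose_apply]
      rw [show star (Cor z' z) = Cor z' z from rfl]
      exact hent_symm z' z
    · intro x
      rw [show star x = x from funext fun z => by simp]
      set w : (∀ j, Fin (n j)) → ℝ := Cor *ᵥ x with hw
      have h9 : Cor *ᵥ w = (P / Q) • w := by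
        rw [hw, Matrix.mulVec_mulVec, hmul, Matrix.smul_mulVec]
      have h10 : w ⬝ᵥ w = (P / Q) * (x ⬝ᵥ w) := by
        calc w ⬝ᵥ w = w ⬝ᵥ (Cor *ᵥ x) := by rw [← hw]
          _ = Cor.vecMul w ⬝ᵥ x := dotProduct_mulVec w Cor x
          _ = (Corᵀ *ᵥ w) ⬝ᵥ x := by rw [Matrix.mulVec_transpose]
          _ = (Cor *ᵥ w) ⬝ᵥ x := by rw [show Corᵀ = Cor from hsymm]
          _ = ((P / Q) • w) ⬝ᵥ x := by rw [h9]
          _ = (P / Q) * (w ⬝ᵥ x) := by rw [smul_dotProduct, smul_eq_mul]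
          _ = (P / Q) * (x ⬝ᵥ w) := by rw [dotProduct_comm]
      have h11 : 0 ≤ w ⬝ᵥ w := Finset.sum_nonneg fun z _ => mul_self_nonneg _
      nlinarith [h10, h11, hPQpos]
  -- a point of the index type
  have z₀ : ∀ j, Fin (n j) := fun j => ⟨0, by have := hn j; omega⟩
  set L := Cor.mulVecLin with hL
  have hLL : ∀ vv : (∀ j, Fin (n j)) → ℝ, L (L vv) = (P / (Q:ℝ)) • L vv := by
    intro vv
    show Cor *ᵥ (Cor *ᵥ vv) = (P / (Q:ℝ)) • (Cor *ᵥ vv)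
    rw [Matrix.mulVec_mulVec, hmul, Matrix.smul_mulVec]
  set lam : ℝ := P / (Q:ℝ) with hlam
  have hlamne : lam ≠ 0 := ne_of_gt hPQpos
  set p : Module.End ℝ ((∀ j, Fin (n j)) → ℝ) := lam⁻¹ • L with hp
  have hppx : ∀ x, p x = lam⁻¹ • L x := fun x => rfl
  have hproj : LinearMap.IsProj (Module.End.eigenspace L lam) p := by
    constructor
    · intro x
      rw [Module.End.mem_eigenspace_iff, hppx, _root_.map_smul]
      rw [hLL x, smul_smul, smul_smul, mul_comm]
    · intro x hx
      rw [Module.End.mem_eigenspace_iff] at hx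
      rw [hppx, hx, smul_smul, inv_mul_cancel₀ hlamne, one_smul]
  have hrange : LinearMap.range p = Module.End.eigenspace L lam := by
    apply le_antisymm
    · rintro y ⟨x, rfl⟩
      exact hproj.map_mem x
    · intro x hx
      exact ⟨x, hproj.map_id x hx⟩
  have hkerp : LinearMap.ker p = LinearMap.ker L :=
    LinearMap.ker_smul L lam⁻¹ (inv_ne_zero hlamne)
  have htrL : LinearMap.trace ℝ _ L = P := by
    rw [hL, trace_mulVecLin]
    show ∑ z : ∀ j, Fin (n j), Cor z z = P
    rw [Finset.sum_congr rfl fun z _ => hdiagone z, Finset.sum_const, Finset.card_univ,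
      nsmul_eq_mul, mul_one, card_pi_real]
  have htrp : LinearMap.trace ℝ _ p = (Q:ℝ) := by
    rw [hp, _root_.map_smul, htrL, smul_eq_mul, hlam]
    field_simp
  have hfr1 : Module.finrank ℝ (Module.End.eigenspace L lam) = Q := by
    have h1 := hproj.trace
    rw [htrp] at h1
    exact_mod_cast h1.symm
  have hdim : Module.finrank ℝ ((∀ j, Fin (n j)) → ℝ) = ∏ i, n i := by
    rw [Module.finrank_fintype_fun_eq_card, Fintype.card_pi]
    simp
  have hrn := LinearMap.finrank_range_add_finrank_ker p
  rw [hrange, hkerp, hdim, hfr1] at hrn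
  have hker0 : Module.End.eigenspace L 0 = LinearMap.ker L := Module.End.eigenspace_zero L
  have hfr2 : Module.finrank ℝ (Module.End.eigenspace L 0) = (∑ i, n i) - M + 1 := by
    rw [hker0]
    omega
  refine ⟨hsymm, hpsd, ?_, ?_, ?_⟩
  · -- eigenvalue set
    ext t
    simp only [Set.mem_setOf_eq, Set.mem_insert_iff, Set.mem_singleton_iff]
    constructor
    · rintro ⟨v, hv, heq⟩
      have e1 : Cor *ᵥ (Cor *ᵥ v) = (P / Q) • (Cor *ᵥ v) := by
        rw [Matrix.mulVec_mulVec, hmul, Matrix.smul_mulVec]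
      rw [heq, Matrix.mulVec_smul, heq] at e1
      have e3 : (t * t - (P / Q) * t) • v = 0 := by
        rw [sub_smul, mul_smul, mul_smul, e1, sub_self]
      rcases smul_eq_zero.mp e3 with h | h
      · have h4 : t * (t - P / Q) = 0 := by rw [mul_sub]; linarith [h]
        rcases mul_eq_zero.mp h4 with h5 | h5
        · exact Or.inl h5
        · exact Or.inr (by linarith [h5])
      · exact absurd h hv
    · have hrowsum : ∀ z : ∀ j, Fin (n j), ∑ z' : ∀ j, Fin (n j), Cor z z' = 0 := by
        intro z
        rw [Finset.sum_congr rfl fun z' _ => hCor' z z', ← Finset.sum_div,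
          Finset.sum_add_distrib, sum_fm_right z,
          Finset.sum_ite_eq univ z (fun _ => P), if_pos (mem_univ z)]
        simp [hP]
      rintro (rfl | rfl)
      · refine ⟨fun _ => 1, ?_, ?_⟩
        · intro h
          have := congrFun h z₀
          simp at this
        · rw [zero_smul]
          funext z
          rw [Matrix.mulVec]
          simpa [dotProduct] using hrowsum z
      · set v₀ : (∀ j, Fin (n j)) → ℝ := fun z' => if z' = z₀ then 1 else 0 with hv₀
        refine ⟨Cor *ᵥ v₀, ?_, ?_⟩
        · intro h
          have h1 : (Cor *ᵥ v₀) z₀ = 1 := by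
            rw [Matrix.mulVec, hv₀]
            simp only [dotProduct, mul_ite, mul_one, mul_zero]
            rw [Finset.sum_ite_eq' univ z₀ (fun z' => Cor z₀ z'), if_pos (mem_univ z₀),
              hdiagone z₀]
          rw [h] at h1
          simp at h1
        · rw [Matrix.mulVec_mulVec, hmul, Matrix.smul_mulVec]
  · -- finrank of the nonzero eigenspace
    exact hfr1
  · exact hfr2
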